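/- Let n ≥ 2 and q > 1. If K_i ∈ K_o^n (i = 1, 2, …) and K_0 ∈ K_o^n are such that K_i → K_0 in the Hausdorff metric, then lim_{i→∞} Ṽ_{γ_n,q}(K_i) = Ṽ_{γ_n,q}(K_0). -/

import Mathlib

open MeasureTheory Metric Set Filter
open scoped RealInnerProductSpace ENNReal Pointwise Topology

lemma abs_rpow_int (c : ℝ) (hc : -1 < c) (R : ℝ) (hR : 0 ≤ R) :
    IntegrableOn (fun t : ℝ => |t| ^ c) (Icc (-R) R) := by
  have h0 : IntegrableOn (fun t : ℝ => |t| ^ c) (Icc 0 R) := by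
    rw [integrableOn_Icc_iff_integrableOn_Ioc]
    exact ((intervalIntegral.intervalIntegrable_rpow' (a := 0) (b := R) hc).1).congr_fun
      (fun t ht => by rw [abs_of_pos ht.1]) measurableSet_Ioc
  have hneg : IntegrableOn (fun t : ℝ => |t| ^ c) (Icc (-R) 0) := by
    have h1 : Integrable (Set.indicator (Icc 0 R) (fun t : ℝ => |t| ^ c)) :=
      (integrable_indicator_iff measurableSet_Icc).2 h0
    have h2 := h1.comp_neg
    have h3 : (fun t : ℝ => Set.indicator (Icc 0 R) (fun t : ℝ => |t| ^ c) (-t))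
        = Set.indicator (Icc (-R) 0) (fun t : ℝ => |t| ^ c) := by
      funext t
      by_cases ht : t ∈ Icc (-R) 0
      · rw [Set.indicator_of_mem ht,
          Set.indicator_of_mem (by constructor <;> [linarith [ht.2]; linarith [ht.1]]), abs_neg]
      · rw [Set.indicator_of_notMem ht, Set.indicator_of_notMem]
        intro h
        exact ht ⟨by linarith [h.2], by linarith [h.1]⟩
    rw [h3] at h2
    exact (integrable_indicator_iff measurableSet_Icc).1 h2
  have : Icc (-R) R = Icc (-R) 0 ∪ Icc 0 R := (Set.Icc_union_Icc_eq_Icc (by linarith) hR).symm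
  rw [this]
  exact hneg.union h0

lemma coord_ne_zero_ae (n : ℕ) :
    ∀ᵐ x : EuclideanSpace ℝ (Fin n), ∀ i, x i ≠ 0 := by
  rw [ae_all_iff]
  intro i
  rw [ae_iff]
  have hset : {x : EuclideanSpace ℝ (Fin n) | ¬ x i ≠ 0}
      = (LinearMap.ker (EuclideanSpace.projₗ i (𝕜 := ℝ)) : Set (EuclideanSpace ℝ (Fin n))) := by
    ext x; simp [LinearMap.mem_ker]
  rw [hset]
  refine Measure.addHaar_submodule _ _ ?_
  intro h
  have h1 : (EuclideanSpace.single i (1:ℝ)) ∈ LinearMap.ker (EuclideanSpace.projₗ i (𝕜 := ℝ)) := by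
    rw [h]; trivial
  rw [LinearMap.mem_ker] at h1
  simp [EuclideanSpace.single_apply] at h1

lemma norm_rpow_integrableOn (n : ℕ) (hn : 0 < n) (s R : ℝ) (hs : -(n:ℝ) < s) :
    IntegrableOn (fun x : EuclideanSpace ℝ (Fin n) => ‖x‖ ^ s) (closedBall 0 R) := by
  rcases le_or_gt 0 s with h0 | h0
  · exact ((continuous_norm.rpow_const (fun x => Or.inr h0)).continuousOn).integrableOn_compact
      (isCompact_closedBall 0 R)
  rcases lt_or_ge R 0 with hR | hR
  · rw [Metric.closedBall_eq_empty.2 hR]; exact integrableOn_empty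
  set c := s / n with hc_def
  have hnpos : (0:ℝ) < n := by exact_mod_cast hn
  have hc : -1 < c := by rw [hc_def, lt_div_iff₀ hnpos, neg_one_mul]; linarith
  have hc0 : c < 0 := div_neg_of_neg_of_pos h0 hnpos
  set h : ℝ → ℝ := Set.indicator (Icc (-R) R) (fun t => |t| ^ c) with hh
  have hInt : Integrable h :=
    (integrable_indicator_iff measurableSet_Icc).2 (abs_rpow_int c hc R hR)
  have hG : Integrable (fun y : Fin n → ℝ => ∏ i, h (y i)) :=
    Integrable.fintype_prod (fun _ => hInt)
  have hmp := EuclideanSpace.volume_preserving_symm_measurableEquiv_toLp (Fin n)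
  have hGE : Integrable (fun x : EuclideanSpace ℝ (Fin n) => ∏ i, h (x i)) :=
    (hmp.integrable_comp_emb (MeasurableEquiv.measurableEmbedding _)).2 hG
  have hmeas : AEStronglyMeasurable
      (Set.indicator (closedBall (0 : EuclideanSpace ℝ (Fin n)) R) (fun x => ‖x‖ ^ s)) volume := by
    have hm : Measurable (fun x : EuclideanSpace ℝ (Fin n) => ‖x‖ ^ s) := by fun_prop
    exact (hm.indicator measurableSet_closedBall).aestronglyMeasurable
  have hbound : ∀ᵐ x : EuclideanSpace ℝ (Fin n),
      ‖Set.indicator (closedBall (0 : EuclideanSpace ℝ (Fin n)) R) (fun x => ‖x‖ ^ s) x‖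
        ≤ ∏ i, h (x i) := by
    filter_upwards [coord_ne_zero_ae n] with x hx
    have hprod_nonneg : 0 ≤ ∏ i, h (x i) :=
      Finset.prod_nonneg fun i _ => Set.indicator_nonneg
        (fun t _ => Real.rpow_nonneg (abs_nonneg t) c) _
    by_cases hxB : x ∈ closedBall (0 : EuclideanSpace ℝ (Fin n)) R
    · rw [Set.indicator_of_mem hxB]
      have hxnorm : ‖x‖ ≤ R := by simpa [mem_closedBall, dist_zero_right] using hxB
      have hxne : x ≠ 0 := by
        intro hx0
        exact hx ⟨0, hn⟩ (by rw [hx0]; rfl)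
      have hxpos : 0 < ‖x‖ := norm_pos_iff.2 hxne
      have hcoord : ∀ i, |x i| ≤ ‖x‖ := by
        intro i
        have h1 : ‖x i‖ ^ 2 ≤ ∑ j, ‖x j‖ ^ 2 :=
          Finset.single_le_sum (fun j _ => sq_nonneg ‖x j‖) (Finset.mem_univ i)
        calc |x i| = ‖x i‖ := (Real.norm_eq_abs _).symm
          _ = Real.sqrt (‖x i‖ ^ 2) := (Real.sqrt_sq (norm_nonneg _)).symm
          _ ≤ Real.sqrt (∑ j, ‖x j‖ ^ 2) := Real.sqrt_le_sqrt h1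
          _ = ‖x‖ := (EuclideanSpace.norm_eq x).symm
      rw [Real.norm_of_nonneg (Real.rpow_nonneg (norm_nonneg x) s)]
      have hterm : ∀ i, h (x i) = |x i| ^ c := by
        intro i
        refine Set.indicator_of_mem ?_ _
        refine ⟨?_, ?_⟩
        · linarith [(abs_le.1 ((hcoord i).trans hxnorm)).1]
        · linarith [(abs_le.1 ((hcoord i).trans hxnorm)).2]
      have hprodeq : (∏ _i : Fin n, ‖x‖ ^ c) = ‖x‖ ^ s := by
        rw [Finset.prod_const, Finset.card_univ, Fintype.card_fin,
          ← Real.rpow_natCast (‖x‖ ^ c) n, ← Real.rpow_mul (norm_nonneg x)]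
        congr 1
        rw [hc_def]
        exact div_mul_cancel₀ s hnpos.ne'
      calc ‖x‖ ^ s = ∏ _i : Fin n, ‖x‖ ^ c := hprodeq.symm
        _ ≤ ∏ i, h (x i) := by
            refine Finset.prod_le_prod (fun i _ => Real.rpow_nonneg (norm_nonneg x) c) ?_
            intro i _
            rw [hterm i]
            exact Real.rpow_le_rpow_of_nonpos (abs_pos.2 (hx i)) (hcoord i) hc0.le
    · rw [Set.indicator_of_notMem hxB, norm_zero]
      exact hprod_nonneg
  have : Integrable (Set.indicator (closedBall (0 : EuclideanSpace ℝ (Fin n)) R)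
      (fun x => ‖x‖ ^ s)) := Integrable.mono' hGE hmeas hbound
  exact (integrable_indicator_iff measurableSet_closedBall).1 this

lemma mem_of_closedBall_subset_of_hausdorffDist_lt {n : ℕ}
    {C A : Set (EuclideanSpace ℝ (Fin n))} (hCconv : Convex ℝ C) (hCcl : IsClosed C)
    (hCne : C.Nonempty) (hCb : Bornology.IsBounded C) (hAb : Bornology.IsBounded A)
    {x : EuclideanSpace ℝ (Fin n)} {r : ℝ} (hr : 0 < r)
    (hball : closedBall x r ⊆ A) (hd : hausdorffDist A C < r) : x ∈ C := by
  by_contra hx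
  obtain ⟨f, u, hfu, hux⟩ := geometric_hahn_banach_closed_point hCconv hCcl hx
  set v := (InnerProductSpace.toDual ℝ (EuclideanSpace ℝ (Fin n))).symm f with hv
  have hinner : ∀ y, ⟪v, y⟫ = f y := fun y => InnerProductSpace.toDual_symm_apply
  obtain ⟨y₀, hy₀⟩ := hCne
  have hvne : v ≠ 0 := by
    intro h0
    have h1 := hinner x
    have h2 := hinner y₀
    rw [h0, inner_zero_left] at h1 h2
    have := hfu y₀ hy₀
    linarith
  have hvpos : 0 < ‖v‖ := norm_pos_iff.2 hvne
  set p := x + (r / ‖v‖) • v with hp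
  have hpx : dist p x = r := by
    rw [dist_eq_norm, hp, add_sub_cancel_left, norm_smul, Real.norm_eq_abs,
      abs_of_pos (div_pos hr hvpos), div_mul_cancel₀ _ hvpos.ne']
  have hpA : p ∈ A := hball (mem_closedBall.2 hpx.le)
  have hkey : ∀ y ∈ C, r ≤ dist p y := by
    intro y hy
    have h1 : ⟪v, p⟫ = f x + r * ‖v‖ := by
      rw [hp, inner_add_right, real_inner_smul_right, real_inner_self_eq_norm_sq, hinner x]
      field_simp
    have h2 : ⟪v, p - y⟫ ≤ ‖v‖ * ‖p - y‖ := real_inner_le_norm v (p - y)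
    have h3 : r * ‖v‖ < ⟪v, p - y⟫ := by
      rw [inner_sub_right, h1, hinner y]
      have := hfu y hy
      linarith
    have h4 : r * ‖v‖ < ‖v‖ * ‖p - y‖ := lt_of_lt_of_le h3 h2
    have h5 : r < ‖p - y‖ := by nlinarith
    rw [dist_eq_norm]
    linarith
  have hCne' : C.Nonempty := ⟨y₀, hy₀⟩
  have hfin := hausdorffEdist_ne_top_of_nonempty_of_bounded ⟨p, hpA⟩ hCne' hAb hCb
  have h6 : infDist p C ≤ hausdorffDist A C := infDist_le_hausdorffDist_of_mem hpA hfin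
  have h7 : ¬ infDist p C < r := by
    intro h
    obtain ⟨y, hy, hdy⟩ := (infDist_lt_iff hCne').1 h
    exact absurd hdy (not_lt.2 (hkey y hy))
  exact h7 (lt_of_le_of_lt h6 hd)

/-- The Gaussian dual quermassintegral `Ṽ_{γ_n,q}(K) = ∫_K e^{-|x|²/2} |x|^{q-n} dx`. -/
noncomputable def gaussDualQuermass (n : ℕ) (q : ℝ)
    (K : Set (EuclideanSpace ℝ (Fin n))) : ℝ :=
  ∫ x in K, Real.exp (-‖x‖ ^ 2 / 2) * ‖x‖ ^ (q - (n : ℝ))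

theorem gaussDualQuermass_continuous (n : ℕ) (hn : 2 ≤ n) (q : ℝ) (hq : 1 < q)
    (K : ℕ → Set (EuclideanSpace ℝ (Fin n))) (K₀ : Set (EuclideanSpace ℝ (Fin n)))
    (hK : ∀ i, IsCompact (K i) ∧ Convex ℝ (K i) ∧ (0 : EuclideanSpace ℝ (Fin n)) ∈ interior (K i))
    (hK₀ : IsCompact K₀ ∧ Convex ℝ K₀ ∧ (0 : EuclideanSpace ℝ (Fin n)) ∈ interior K₀)
    (hconv : Tendsto (fun i => Metric.hausdorffDist (K i) K₀) atTop (𝓝 0)) :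
    Tendsto (fun i => gaussDualQuermass n q (K i)) atTop (𝓝 (gaussDualQuermass n q K₀)) := by
  obtain ⟨hK₀c, hK₀conv, hK₀int⟩ := hK₀
  set f : EuclideanSpace ℝ (Fin n) → ℝ :=
    fun x => Real.exp (-‖x‖ ^ 2 / 2) * ‖x‖ ^ (q - (n : ℝ)) with hf
  have hfmeas : Measurable f := by fun_prop
  have hfnonneg : ∀ x, 0 ≤ f x := fun x =>
    mul_nonneg (Real.exp_nonneg _) (Real.rpow_nonneg (norm_nonneg _) _)
  obtain ⟨R₀, hR₀⟩ := hK₀c.isBounded.subset_closedBall 0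
  set R : ℝ := max R₀ 0 + 1 with hR
  have hK₀R : K₀ ⊆ closedBall 0 (max R₀ 0) :=
    hR₀.trans (closedBall_subset_closedBall (le_max_left _ _))
  have hKne : ∀ i, (K i).Nonempty := fun i => ⟨0, interior_subset (hK i).2.2⟩
  have hK₀ne : K₀.Nonempty := ⟨0, interior_subset hK₀int⟩
  have hfinEdist : ∀ i, EMetric.hausdorffEdist (K i) K₀ ≠ ⊤ := fun i =>
    hausdorffEdist_ne_top_of_nonempty_of_bounded (hKne i) hK₀ne (hK i).1.isBounded
      hK₀c.isBounded
  have hsub : ∀ᶠ i in atTop, K i ⊆ closedBall 0 R := by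
    filter_upwards [hconv.eventually (gt_mem_nhds one_pos)] with i hi x hx
    have h1 : infDist x K₀ ≤ hausdorffDist (K i) K₀ :=
      infDist_le_hausdorffDist_of_mem hx (hfinEdist i)
    have h2 : infDist x K₀ < 1 := lt_of_le_of_lt h1 hi
    obtain ⟨y, hy, hxy⟩ := (infDist_lt_iff hK₀ne).1 h2
    have hyR : ‖y‖ ≤ max R₀ 0 := mem_closedBall_zero_iff.1 (hK₀R hy)
    have h3 : ‖x‖ - ‖y‖ ≤ ‖x - y‖ := norm_sub_norm_le x y
    rw [mem_closedBall_zero_iff, hR]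
    rw [dist_eq_norm] at hxy
    linarith
  set bound : EuclideanSpace ℝ (Fin n) → ℝ :=
    indicator (closedBall 0 R) (fun x => ‖x‖ ^ (q - (n : ℝ))) with hbnd
  have hsexp : -(n : ℝ) < q - n := by linarith
  have hboundInt : Integrable bound :=
    (integrable_indicator_iff measurableSet_closedBall).2
      (norm_rpow_integrableOn n (by omega) _ R hsexp)
  set F : ℕ → EuclideanSpace ℝ (Fin n) → ℝ := fun i => indicator (K i) f with hF
  have hFmeas : ∀ᶠ i in atTop, AEStronglyMeasurable (F i) volume :=
    Eventually.of_forall fun i =>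
      (hfmeas.indicator (hK i).1.isClosed.measurableSet).aestronglyMeasurable
  have hFbound : ∀ᶠ i in atTop, ∀ᵐ x, ‖F i x‖ ≤ bound x := by
    filter_upwards [hsub] with i hi
    refine ae_of_all _ fun x => ?_
    show ‖(K i).indicator f x‖ ≤ bound x
    by_cases hx : x ∈ K i
    · rw [indicator_of_mem hx, Real.norm_of_nonneg (hfnonneg x), hbnd,
        indicator_of_mem (hi hx)]
      have hexp : Real.exp (-‖x‖ ^ 2 / 2) ≤ 1 := Real.exp_le_one_iff.2 (by nlinarith [sq_nonneg ‖x‖])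
      exact mul_le_of_le_one_left (Real.rpow_nonneg (norm_nonneg _) _) hexp
    · rw [indicator_of_notMem hx, norm_zero]
      exact indicator_nonneg (fun y _ => Real.rpow_nonneg (norm_nonneg _) _) x
  have hlim : ∀ᵐ x, Tendsto (fun i => F i x) atTop (𝓝 (indicator K₀ f x)) := by
    have hfr : volume (frontier K₀) = 0 := hK₀conv.addHaar_frontier volume
    filter_upwards [measure_eq_zero_iff_ae_notMem.1 hfr] with x hx
    by_cases hxin : x ∈ interior K₀
    · obtain ⟨r, hrpos, hball⟩ : ∃ r > 0, closedBall x r ⊆ K₀ := by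
        obtain ⟨ε, hε, hb⟩ := Metric.isOpen_iff.1 isOpen_interior x hxin
        exact ⟨ε / 2, half_pos hε,
          (closedBall_subset_ball (half_lt_self hε)).trans (hb.trans interior_subset)⟩
      have hev : ∀ᶠ i in atTop, x ∈ K i := by
        filter_upwards [hconv.eventually (gt_mem_nhds hrpos)] with i hi
        refine mem_of_closedBall_subset_of_hausdorffDist_lt (hK i).2.1 (hK i).1.isClosed
          (hKne i) (hK i).1.isBounded hK₀c.isBounded hrpos hball ?_
        rwa [hausdorffDist_comm]
      have heq : ∀ᶠ i in atTop, F i x = f x := hev.mono fun i hi => indicator_of_mem hi f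
      rw [indicator_of_mem (interior_subset hxin) f]
      exact Tendsto.congr' (heq.mono fun i hi => hi.symm) tendsto_const_nhds
    · have hxout : x ∉ K₀ := fun h => hx ⟨subset_closure h, hxin⟩
      have hdpos : 0 < infDist x K₀ :=
        (hK₀c.isClosed.notMem_iff_infDist_pos hK₀ne).1 hxout
      have hev : ∀ᶠ i in atTop, x ∉ K i := by
        filter_upwards [hconv.eventually (gt_mem_nhds hdpos)] with i hi hmem
        have := infDist_le_hausdorffDist_of_mem hmem (hfinEdist i)
        linarith
      have heq : ∀ᶠ i in atTop, F i x = 0 := hev.mono fun i hi => indicator_of_notMem hi f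
      rw [indicator_of_notMem hxout f]
      exact Tendsto.congr' (heq.mono fun i hi => hi.symm) tendsto_const_nhds
  have hmain := tendsto_integral_filter_of_dominated_convergence bound hFmeas hFbound
    hboundInt hlim
  have h1 : (fun i => ∫ x, F i x) = fun i => gaussDualQuermass n q (K i) := by
    funext i
    rw [hF, integral_indicator (hK i).1.isClosed.measurableSet]
    rfl
  have h2 : (∫ x, indicator K₀ f x) = gaussDualQuermass n q K₀ := by
    rw [integral_indicator hK₀c.isClosed.measurableSet]
    rfl
  rw [h1, h2] at hmain
  exact hmain
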